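/- Uniqueness of compressed partitions: for disjoint nonempty finite sets X, Y and a combination set Q over X ∪ Y, if {(P_1,S_1),...,(P_n,S_n)} and {(P'_1,S'_1),...,(P'_m,S'_m)} are both compressed (X,Y)-partitions of Q (i.e., partitions in which the subs S_i are pairwise distinct, and similarly the S'_j), then n = m and the two sets of pairs are equal. -/
import Mathlib


/-- `P, S : Fin n → Finset (Finset α)` form an `(X,Y)`-partition of `Q`. -/
def IsPartition {α : Type*} [DecidableEq α] (X Y : Finset α) (Q : Finset (Finset α))
    {n : ℕ} (P S : Fin n → Finset (Finset α)) : Prop :=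
  (∀ i, (P i).Nonempty) ∧
  (∀ i, ∀ A ∈ P i, A ⊆ X) ∧
  (∀ i, ∀ B ∈ S i, B ⊆ Y) ∧
  (∀ i j, i ≠ j → P i ∩ P j = ∅) ∧
  (Finset.univ.biUnion P = X.powerset) ∧
  (Q = Finset.univ.biUnion fun i => Finset.image₂ (· ∪ ·) (P i) (S i))

private lemma inter_left_of_subsets {α : Type*} [DecidableEq α] {X Y A B : Finset α}
    (h : Disjoint X Y) (hA : A ⊆ X) (hB : B ⊆ Y) : (A ∪ B) ∩ X = A := by
  rw [Finset.union_inter_distrib_right, Finset.inter_eq_left.mpr hA,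
    Finset.disjoint_iff_inter_eq_empty.mp ((h.symm.mono_left hB).symm).symm]
  · simp

private lemma inter_right_of_subsets {α : Type*} [DecidableEq α] {X Y A B : Finset α}
    (h : Disjoint X Y) (hA : A ⊆ X) (hB : B ⊆ Y) : (A ∪ B) ∩ Y = B := by
  rw [Finset.union_inter_distrib_right, Finset.inter_eq_left.mpr hB,
    Finset.disjoint_iff_inter_eq_empty.mp (h.mono_left hA)]
  · simp

/-- The trace of `A` in `Q` equals `S i` when `A ∈ P i`. -/
private lemma trace_eq {α : Type*} [DecidableEq α] {X Y : Finset α} (h : Disjoint X Y)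
    {Q : Finset (Finset α)} {n : ℕ} {P S : Fin n → Finset (Finset α)}
    (hPS : IsPartition X Y Q P S) {i : Fin n} {A : Finset α} (hA : A ∈ P i) :
    Y.powerset.filter (fun B => A ∪ B ∈ Q) = S i := by
  obtain ⟨hne, hPX, hSY, hdisj, hcover, hQeq⟩ := hPS
  ext B
  simp only [Finset.mem_filter, Finset.mem_powerset]
  constructor
  · rintro ⟨hBY, hABQ⟩
    rw [hQeq] at hABQ
    simp only [Finset.mem_biUnion, Finset.mem_univ, true_and, Finset.mem_image₂] at hABQ
    obtain ⟨j, A', hA', B', hB', hAB⟩ := hABQ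
    have hAX : A ⊆ X := hPX i A hA
    have hA'X : A' ⊆ X := hPX j A' hA'
    have hB'Y : B' ⊆ Y := hSY j B' hB'
    have hAA' : A' = A := by
      rw [← inter_left_of_subsets h hA'X hB'Y, hAB, inter_left_of_subsets h hAX hBY]
    have hij : j = i := by
      by_contra hji
      have hm : A ∈ P j ∩ P i := Finset.mem_inter.mpr ⟨hAA' ▸ hA', hA⟩
      rw [hdisj j i hji] at hm
      exact absurd hm (Finset.notMem_empty A)
    have hBB' : B' = B := by
      rw [← inter_right_of_subsets h hA'X hB'Y, hAB, inter_right_of_subsets h hAX hBY]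
    subst hij; subst hBB'; exact hB'
  · intro hB
    refine ⟨hSY i B hB, ?_⟩
    rw [hQeq]
    simp only [Finset.mem_biUnion, Finset.mem_univ, true_and, Finset.mem_image₂]
    exact ⟨i, A, hA, B, hB, rfl⟩

/-- Each block is recovered from its trace. -/
private lemma part_eq {α : Type*} [DecidableEq α] {X Y : Finset α} (h : Disjoint X Y)
    {Q : Finset (Finset α)} {n : ℕ} {P S : Fin n → Finset (Finset α)}
    (hPS : IsPartition X Y Q P S)
    (hcomp : ∀ i j, i ≠ j → S i ≠ S j) (i : Fin n) :
    P i = X.powerset.filter (fun A => Y.powerset.filter (fun B => A ∪ B ∈ Q) = S i) := by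
  ext A
  simp only [Finset.mem_filter, Finset.mem_powerset]
  constructor
  · intro hA
    exact ⟨hPS.2.1 i A hA, trace_eq h hPS hA⟩
  · rintro ⟨hAX, hT⟩
    have hmem : A ∈ Finset.univ.biUnion P := by
      rw [hPS.2.2.2.2.1]; exact Finset.mem_powerset.mpr hAX
    simp only [Finset.mem_biUnion, Finset.mem_univ, true_and] at hmem
    obtain ⟨j, hAj⟩ := hmem
    have hSS : S j = S i := by rw [← trace_eq h hPS hAj, hT]
    have hji : j = i := by
      by_contra hji
      exact hcomp j i hji hSS
    exact hji ▸ hAj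

/-- Uniqueness of compressed (X,Y)-partitions. -/
theorem compressed_partition_unique {α : Type*} [DecidableEq α] (X Y : Finset α)
    (h : Disjoint X Y) (hX : X.Nonempty) (hY : Y.Nonempty)
    (Q : Finset (Finset α)) (hQ : ∀ A ∈ Q, A ⊆ X ∪ Y)
    {n m : ℕ} (P S : Fin n → Finset (Finset α)) (P' S' : Fin m → Finset (Finset α))
    (hPS : IsPartition X Y Q P S) (hPS' : IsPartition X Y Q P' S')
    (hcomp : ∀ i j, i ≠ j → S i ≠ S j) (hcomp' : ∀ i j, i ≠ j → S' i ≠ S' j) :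
    n = m ∧ Set.range (fun i => (P i, S i)) = Set.range (fun j => (P' j, S' j)) := by
  have key : ∀ i : Fin n, ∃ j : Fin m, P i = P' j ∧ S i = S' j := by
    intro i
    obtain ⟨A, hA⟩ := hPS.1 i
    have hAX : A ⊆ X := hPS.2.1 i A hA
    have hmem : A ∈ Finset.univ.biUnion P' := by
      rw [hPS'.2.2.2.2.1]; exact Finset.mem_powerset.mpr hAX
    simp only [Finset.mem_biUnion, Finset.mem_univ, true_and] at hmem
    obtain ⟨j, hAj⟩ := hmem
    have hS : S i = S' j := by rw [← trace_eq h hPS hA, trace_eq h hPS' hAj]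
    have hP : P i = P' j := by
      rw [part_eq h hPS hcomp i, part_eq h hPS' hcomp' j, hS]
    exact ⟨j, hP, hS⟩
  have key' : ∀ j : Fin m, ∃ i : Fin n, P' j = P i ∧ S' j = S i := by
    intro j
    obtain ⟨A, hA⟩ := hPS'.1 j
    have hAX : A ⊆ X := hPS'.2.1 j A hA
    have hmem : A ∈ Finset.univ.biUnion P := by
      rw [hPS.2.2.2.2.1]; exact Finset.mem_powerset.mpr hAX
    simp only [Finset.mem_biUnion, Finset.mem_univ, true_and] at hmem
    obtain ⟨i, hAi⟩ := hmem
    have hS : S' j = S i := by rw [← trace_eq h hPS' hA, trace_eq h hPS hAi]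
    have hP : P' j = P i := by
      rw [part_eq h hPS' hcomp' j, part_eq h hPS hcomp i, hS]
    exact ⟨i, hP, hS⟩
  choose f hf1 hf2 using key
  choose g hg1 hg2 using key'
  have hfinj : Function.Injective f := by
    intro i i' hii
    by_contra hne
    exact hcomp i i' hne (by rw [hf2 i, hf2 i', hii])
  have hginj : Function.Injective g := by
    intro j j' hjj
    by_contra hne
    exact hcomp' j j' hne (by rw [hg2 j, hg2 j', hjj])
  constructor
  · have h1 : n ≤ m := by
      simpa using Fintype.card_le_of_injective f hfinj
    have h2 : m ≤ n := by
      simpa using Fintype.card_le_of_injective g hginj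
    omega
  · ext p
    simp only [Set.mem_range]
    constructor
    · rintro ⟨i, rfl⟩
      exact ⟨f i, by rw [← hf1 i, ← hf2 i]⟩
    · rintro ⟨j, rfl⟩
      exact ⟨g j, by rw [← hg1 j, ← hg2 j]⟩
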